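/- If a program P and a query Ā are both well-moded and simply moded, then every LD-derivation of Ā in P is unification-free: whenever an atom A is selected and resolved via a (variable-disjoint variant of a) clause H ← B̄ of P, the unification of A and H reduces to a double matching — there is a substitution matching the input positions of H to those of A (i.e., a substitution θ₁ acting only on variables of H with (input terms of H)θ₁ = input terms of A) and a substitution matching the output positions of A to those of Hθ₁ (i.e., a substitution θ₂ acting only on variables of A with (output terms of A)θ₂ = output terms of Hθ₁), and the composition yields a most general unifier of A and H. -/

import Mathlib

/-- First-order terms over function symbols `F` and variables `V`. -/
inductive Term (F V : Type) : Type where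
  | var : V → Term F V
  | fn  : F → List (Term F V) → Term F V

namespace Term

/-- `VarIn v t` holds iff the variable `v` occurs in the term `t`. -/
inductive VarIn {F V : Type} : V → Term F V → Prop where
  | var (v : V) : VarIn v (.var v)
  | fn {v : V} (f : F) {args : List (Term F V)} {t : Term F V} :
      t ∈ args → VarIn v t → VarIn v (.fn f args)

/-- Application of a substitution (a map from variables to terms) to a term. -/
def subst {F V : Type} (σ : V → Term F V) : Term F V → Term F V
  | .var v => σ v
  | .fn f args => .fn f (args.attach.map fun t => subst σ t.1)
termination_by t => sizeOf t
decreasing_by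
  have := List.sizeOf_lt_of_mem t.2
  simp only [Term.fn.sizeOf_spec]
  omega

end Term

/-- The set of variables occurring in a list (tuple) of terms. -/
def varsOf {F V : Type} (ts : List (Term F V)) : Set V :=
  {v | ∃ t ∈ ts, Term.VarIn v t}

/-- An atom `p(s̄, t̄)`: a relation symbol together with the tuple of terms
filling its input positions and the tuple filling its output positions. -/
structure Atom (P F V : Type) where
  pred : P
  inputs : List (Term F V)
  outputs : List (Term F V)

/-- Application of a substitution to an atom. -/
def Atom.subst {P F V : Type} (σ : V → Term F V) (A : Atom P F V) : Atom P F V :=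
  ⟨A.pred, A.inputs.map (Term.subst σ), A.outputs.map (Term.subst σ)⟩

/-- The set of variables occurring in an atom. -/
def Atom.vars {P F V : Type} (A : Atom P F V) : Set V :=
  varsOf A.inputs ∪ varsOf A.outputs

/-- The set of variables occurring in a query (a list of atoms). -/
def queryVars {P F V : Type} (Q : List (Atom P F V)) : Set V :=
  {v | ∃ a ∈ Q, v ∈ a.vars}

/-- A query `p_1(s̄_1,t̄_1), …, p_n(s̄_n,t̄_n)` is well-moded iff for every `i`,
`Var(s̄_i) ⊆ ⋃_{j=1}^{i-1} Var(t̄_j)`. -/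
def WellModedQuery {P F V : Type} (Q : List (Atom P F V)) : Prop :=
  ∀ i (h : i < Q.length),
    varsOf (Q.get ⟨i, h⟩).inputs ⊆ varsOf (((Q.take i).map Atom.outputs).flatten)

/-- A clause `p_0(t̄_0, s̄_{n+1}) ← p_1(s̄_1,t̄_1), …, p_n(s̄_n,t̄_n)` (with head
input tuple `t̄_0 = head.inputs` and head output tuple `s̄_{n+1} = head.outputs`)
is well-moded iff for every `i ∈ [1, n+1]`, `Var(s̄_i) ⊆ ⋃_{j=0}^{i-1} Var(t̄_j)`. -/
def WellModedClause {P F V : Type} (head : Atom P F V) (body : List (Atom P F V)) : Prop :=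
  (∀ i (h : i < body.length),
    varsOf (body.get ⟨i, h⟩).inputs ⊆
      varsOf (head.inputs ++ ((body.take i).map Atom.outputs).flatten)) ∧
  varsOf head.outputs ⊆ varsOf (head.inputs ++ (body.map Atom.outputs).flatten)

/-- Composition of substitutions: first apply `θ`, then `τ`. -/
def Subst.comp {F V : Type} (θ τ : V → Term F V) : V → Term F V :=
  fun v => (θ v).subst τ

/-- `θ` is a unifier of the atoms `A` and `H` iff `Aθ = Hθ`. -/
def IsUnifier {P F V : Type} (θ : V → Term F V) (A H : Atom P F V) : Prop :=
  A.subst θ = H.subst θ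

/-- `θ` is a most general unifier of `A` and `H` iff it is a unifier and every
unifier of `A` and `H` factors through it. -/
def IsMGU {P F V : Type} (θ : V → Term F V) (A H : Atom P F V) : Prop :=
  IsUnifier θ A H ∧ ∀ σ : V → Term F V, IsUnifier σ A H → ∃ τ : V → Term F V,
    ∀ v, σ v = (θ v).subst τ

/-- A clause `p_0(s̄_0, t̄_{n+1}) ← p_1(s̄_1,t̄_1), …, p_n(s̄_n,t̄_n)` (with head
input tuple `s̄_0 = head.inputs`) is simply moded iff `t̄_1, …, t̄_n` is a linear
family of variables (every term in the body output tuples is a variable, and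
each such variable occurs exactly once among them) and for every `i ∈ [1, n]`,
`Var(t̄_i) ∩ ⋃_{j=0}^{i} Var(s̄_j) = ∅`. -/
def SimplyModedClause {P F V : Type} (head : Atom P F V) (body : List (Atom P F V)) : Prop :=
  (∀ t ∈ (body.map Atom.outputs).flatten, ∃ v : V, t = Term.var v) ∧
  ((body.map Atom.outputs).flatten).Nodup ∧
  ∀ i (h : i < body.length),
    varsOf (body.get ⟨i, h⟩).outputs ∩
      varsOf (head.inputs ++ ((body.take (i + 1)).map Atom.inputs).flatten) = ∅

/-- A query is simply moded iff the clause `q ← Ā` with a dummy zero-arity head is. -/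
def SimplyModedQuery {P F V : Type} (Q : List (Atom P F V)) : Prop :=
  (∀ t ∈ (Q.map Atom.outputs).flatten, ∃ v : V, t = Term.var v) ∧
  ((Q.map Atom.outputs).flatten).Nodup ∧
  ∀ i (h : i < Q.length),
    varsOf (Q.get ⟨i, h⟩).outputs ∩
      varsOf (((Q.take (i + 1)).map Atom.inputs).flatten) = ∅

/-- A definite clause `head ← body`. -/
structure Clause (P F V : Type) where
  head : Atom P F V
  body : List (Atom P F V)

/-- Application of a substitution to a clause. -/
def Clause.subst {P F V : Type} (σ : V → Term F V) (c : Clause P F V) : Clause P F V :=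
  ⟨c.head.subst σ, c.body.map (Atom.subst σ)⟩

/-- The set of variables occurring in a clause. -/
def Clause.vars {P F V : Type} (c : Clause P F V) : Set V :=
  c.head.vars ∪ queryVars c.body

/-- One step of LD-resolution in the program `Prog`: the leftmost atom `A` of the
current query is the selected atom, and the next query is `(B̄ ++ rest)θ` where
`H ← B̄` is a variant (obtained via a renaming `ρ`) of a clause of `Prog` that is
variable-disjoint with the current query and `θ` is a most general unifier of
`A` and `H`. -/
def LDStep {P F V : Type} (Prog : Set (Clause P F V))
    (Q Q' : List (Atom P F V)) : Prop :=
  ∃ (A : Atom P F V) (rest : List (Atom P F V)) (c : Clause P F V)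
    (ρ : V → V) (θ : V → Term F V),
    Q = A :: rest ∧ c ∈ Prog ∧ Function.Injective ρ ∧
    Disjoint (queryVars Q) (Clause.vars (c.subst (fun v => Term.var (ρ v)))) ∧
    IsMGU θ A (c.subst (fun v => Term.var (ρ v))).head ∧
    Q' = ((c.subst (fun v => Term.var (ρ v))).body ++ rest).map (Atom.subst θ)


section Lemmas

open Term

variable {P F V : Type}

/-- Custom induction principle for `Term`. -/
theorem Term.ind {motive : Term F V → Prop}
    (hvar : ∀ v, motive (.var v))
    (hfn : ∀ f args, (∀ t ∈ args, motive t) → motive (.fn f args)) :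
    ∀ t, motive t := by
  have key : ∀ n (t : Term F V), sizeOf t ≤ n → motive t := by
    intro n
    induction n with
    | zero =>
      intro t ht
      cases t <;> simp at ht
    | succ n ih =>
      intro t ht
      cases t with
      | var v => exact hvar v
      | fn f args =>
        refine hfn f args fun t htm => ih t ?_
        have := List.sizeOf_lt_of_mem htm
        simp only [Term.fn.sizeOf_spec] at ht
        omega
  exact fun t => key (sizeOf t) t le_rfl

@[simp] theorem Term.subst_var (σ : V → Term F V) (v : V) :
    (Term.var (F := F) v).subst σ = σ v := by
  simp [Term.subst]

@[simp] theorem Term.subst_fn (σ : V → Term F V) (f : F) (args : List (Term F V)) :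
    (Term.fn f args).subst σ = .fn f (args.map (Term.subst σ)) := by
  rw [Term.subst]
  simp [List.attach, List.attachWith, List.map_pmap]

theorem Term.varIn_var_iff {v w : V} : VarIn (F := F) v (.var w) ↔ v = w := by
  constructor
  · rintro ⟨⟩; rfl
  · rintro rfl; exact .var v

theorem Term.varIn_fn_iff {v : V} {f : F} {args : List (Term F V)} :
    VarIn v (.fn f args) ↔ ∃ t ∈ args, VarIn v t := by
  constructor
  · rintro (_ | ⟨_, ht, hv⟩); exact ⟨_, ht, hv⟩
  · rintro ⟨t, ht, hv⟩; exact .fn f ht hv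

theorem Term.subst_congrOn {σ τ : V → Term F V} :
    ∀ {t : Term F V}, (∀ v, VarIn v t → σ v = τ v) → t.subst σ = t.subst τ := by
  intro t
  induction t using Term.ind with
  | hvar v => intro h; simpa using h v (.var v)
  | hfn f args ih =>
    intro h
    simp only [subst_fn, Term.fn.injEq, true_and]
    exact List.map_congr_left fun t ht => ih t ht fun v hv => h v (.fn f ht hv)

@[simp] theorem Term.subst_id : ∀ (t : Term F V), t.subst Term.var = t := by
  intro t
  induction t using Term.ind with
  | hvar v => simp
  | hfn f args ih =>
    simp only [subst_fn, Term.fn.injEq, true_and]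
    calc args.map (Term.subst Term.var) = args.map id := List.map_congr_left ih
      _ = args := List.map_id args

theorem Term.subst_eq_of_id {σ : V → Term F V} {t : Term F V}
    (h : ∀ v, VarIn v t → σ v = Term.var v) : t.subst σ = t := by
  rw [Term.subst_congrOn h, Term.subst_id]

theorem Term.subst_subst (σ τ : V → Term F V) :
    ∀ (t : Term F V), (t.subst σ).subst τ = t.subst (Subst.comp σ τ) := by
  intro t
  induction t using Term.ind with
  | hvar v => simp [Subst.comp]
  | hfn f args ih =>
    simp only [subst_fn, List.map_map, Term.fn.injEq, true_and]
    exact List.map_congr_left fun t ht => ih t ht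

theorem Term.varIn_subst {σ : V → Term F V} {w : V} :
    ∀ {t : Term F V}, VarIn w (t.subst σ) ↔ ∃ v, VarIn v t ∧ VarIn w (σ v) := by
  intro t
  induction t using Term.ind with
  | hvar v => simp [varIn_var_iff]
  | hfn f args ih =>
    simp only [subst_fn, varIn_fn_iff, List.mem_map]
    constructor
    · rintro ⟨t', ⟨t, ht, rfl⟩, hw⟩
      obtain ⟨v, hv, hw⟩ := (ih t ht).mp hw
      exact ⟨v, ⟨t, ht, hv⟩, hw⟩
    · rintro ⟨v, ⟨t, ht, hv⟩, hw⟩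
      exact ⟨t.subst σ, ⟨t, ht, rfl⟩, (ih t ht).mpr ⟨v, hv, hw⟩⟩

theorem Term.subst_eq_subst_var {σ τ : V → Term F V} :
    ∀ {t : Term F V}, t.subst σ = t.subst τ → ∀ v, VarIn v t → σ v = τ v := by
  intro t
  induction t using Term.ind with
  | hvar v => intro h w hw; rw [varIn_var_iff] at hw; subst hw; simpa using h
  | hfn f args ih =>
    intro h v hv
    rw [varIn_fn_iff] at hv
    obtain ⟨t, ht, hv⟩ := hv
    simp only [subst_fn, Term.fn.injEq, true_and] at h
    exact ih t ht (List.map_eq_map_iff.mp h t ht) v hv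

end Lemmas
section Lemmas2

open Term

variable {P F V : Type}

theorem mem_varsOf {v : V} {ts : List (Term F V)} :
    v ∈ varsOf ts ↔ ∃ t ∈ ts, VarIn v t := Iff.rfl

theorem varsOf_append {l₁ l₂ : List (Term F V)} :
    varsOf (l₁ ++ l₂) = varsOf l₁ ∪ varsOf l₂ := by
  ext v
  simp [varsOf, List.mem_append, or_and_right, exists_or]

theorem varsOf_map_subst {σ : V → Term F V} {ts : List (Term F V)} {w : V} :
    w ∈ varsOf (ts.map (Term.subst σ)) ↔ ∃ v ∈ varsOf ts, VarIn w (σ v) := by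
  simp only [mem_varsOf, List.mem_map]
  constructor
  · rintro ⟨t', ⟨t, ht, rfl⟩, hw⟩
    obtain ⟨v, hv, hw⟩ := Term.varIn_subst.mp hw
    exact ⟨v, ⟨t, ht, hv⟩, hw⟩
  · rintro ⟨v, ⟨t, ht, hv⟩, hw⟩
    exact ⟨t.subst σ, ⟨t, ht, rfl⟩, Term.varIn_subst.mpr ⟨v, hv, hw⟩⟩

/-- If `σ` is the identity on all variables of `ts`, then `ts.map (subst σ) = ts`. -/
theorem map_subst_eq_of_id {σ : V → Term F V} {ts : List (Term F V)}
    (h : ∀ v ∈ varsOf ts, σ v = Term.var v) : ts.map (Term.subst σ) = ts := by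
  calc ts.map (Term.subst σ) = ts.map id :=
        List.map_congr_left fun t ht =>
          Term.subst_eq_of_id fun v hv => h v ⟨t, ht, hv⟩
    _ = ts := List.map_id ts

theorem map_subst_congrOn {σ τ : V → Term F V} {ts : List (Term F V)}
    (h : ∀ v ∈ varsOf ts, σ v = τ v) :
    ts.map (Term.subst σ) = ts.map (Term.subst τ) :=
  List.map_congr_left fun t ht => Term.subst_congrOn fun v hv => h v ⟨t, ht, hv⟩

theorem map_subst_subst {σ τ : V → Term F V} (ts : List (Term F V)) :
    (ts.map (Term.subst σ)).map (Term.subst τ) = ts.map (Term.subst (Subst.comp σ τ)) := by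
  rw [List.map_map]
  exact List.map_congr_left fun t _ => Term.subst_subst σ τ t

theorem Atom.subst_subst {σ τ : V → Term F V} (a : Atom P F V) :
    (a.subst σ).subst τ = a.subst (Subst.comp σ τ) := by
  simp only [Atom.subst, map_subst_subst]

theorem Atom.subst_id' {σ : V → Term F V} {a : Atom P F V}
    (h : ∀ v ∈ a.vars, σ v = Term.var v) : a.subst σ = a := by
  cases a with
  | mk p ins outs =>
    simp only [Atom.subst, Atom.mk.injEq, true_and]
    exact ⟨map_subst_eq_of_id fun v hv => h v (Or.inl hv),
      map_subst_eq_of_id fun v hv => h v (Or.inr hv)⟩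

/-- Lookup: given parallel lists `outs` and `hs`, find the first position of
`var v` in `outs` and return the corresponding element of `hs`. -/
noncomputable def lookupOut : List (Term F V) → List (Term F V) → V → Term F V
  | [], _, v => .var v
  | _, [], v => .var v
  | t :: ts, h :: hs, v => by
      classical exact if t = Term.var v then h else lookupOut ts hs v

theorem lookupOut_not_mem {outs hs : List (Term F V)} {v : V}
    (h : ∀ t ∈ outs, t ≠ Term.var v) : lookupOut outs hs v = .var v := by
  induction outs generalizing hs with
  | nil => cases hs <;> rfl
  | cons t ts ih =>
    cases hs with
    | nil => rfl
    | cons h' hs' =>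
      rw [lookupOut]
      rw [if_neg (h t (List.mem_cons_self))]
      exact ih fun t' ht' => h t' (List.mem_cons_of_mem _ ht')

theorem lookupOut_mem_or {outs hs : List (Term F V)} {v : V} :
    lookupOut outs hs v = .var v ∨ lookupOut outs hs v ∈ hs := by
  induction outs generalizing hs with
  | nil => cases hs <;> exact Or.inl rfl
  | cons t ts ih =>
    cases hs with
    | nil => exact Or.inl rfl
    | cons h' hs' =>
      rw [lookupOut]
      split
      · exact Or.inr (List.mem_cons_self)
      · rcases ih (hs := hs') with h | h
        · exact Or.inl h
        · exact Or.inr (List.mem_cons_of_mem _ h)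

theorem lookupOut_mem {outs hs : List (Term F V)} {v : V}
    (hv : Term.var v ∈ outs) (hlen : outs.length = hs.length) :
    lookupOut outs hs v ∈ hs := by
  induction outs generalizing hs with
  | nil => simp at hv
  | cons t ts ih =>
    cases hs with
    | nil => simp at hlen
    | cons h' hs' =>
      rw [lookupOut]
      split
      · exact List.mem_cons_self
      · rcases List.mem_cons.mp hv with h | h
        · exact absurd h.symm (by assumption)
        · exact List.mem_cons_of_mem _ (ih h (by simpa using hlen))

/-- The key property: if `outs` is a Nodup list of variable terms of the same
length as `hs`, then substituting via `lookupOut outs hs` maps `outs` to `hs`. -/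
theorem map_lookupOut {outs hs : List (Term F V)}
    (hvars : ∀ t ∈ outs, ∃ v : V, t = Term.var v)
    (hnd : outs.Nodup) (hlen : outs.length = hs.length) :
    outs.map (Term.subst (lookupOut outs hs)) = hs := by
  -- generalize: lookup in a bigger pair of lists that extends
  suffices key : ∀ outs' hs' : List (Term F V),
      (∀ t ∈ outs', ∃ v : V, t = Term.var v) → outs'.Nodup →
      outs'.length = hs'.length →
      (∀ v : V, Term.var v ∈ outs' → lookupOut outs hs v = lookupOut outs' hs' v) →
      outs'.map (Term.subst (lookupOut outs hs)) = hs' by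
    exact key outs hs hvars hnd hlen fun _ _ => rfl
  intro outs' hs'
  induction outs' generalizing hs' with
  | nil =>
    intro _ _ hlen _
    cases hs' with
    | nil => rfl
    | cons _ _ => simp at hlen
  | cons t ts ih =>
    intro hvars' hnd' hlen' hagree
    cases hs' with
    | nil => simp at hlen'
    | cons h' hs'' =>
      obtain ⟨v, rfl⟩ := hvars' _ (List.mem_cons_self)
      simp only [List.map_cons, Term.subst_var, List.cons.injEq]
      constructor
      · rw [hagree v (List.mem_cons_self), lookupOut, if_pos rfl]
      · refine ih hs'' (fun t' ht' => hvars' t' (List.mem_cons_of_mem _ ht'))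
          (List.Nodup.of_cons hnd') (by simpa using hlen') ?_
        intro w hw
        rw [hagree w (List.mem_cons_of_mem _ hw), lookupOut]
        have hne : (Term.var w : Term F V) ≠ Term.var v := by
          intro hvw
          exact (List.nodup_cons.mp hnd').1 (hvw ▸ hw)
        rw [if_neg (fun hc => hne (by rw [hc]))]

end Lemmas2
section Core

open Term

variable {P F V : Type}

theorem mem_varsOf_of_var {v : V} {ts : List (Term F V)}
    (hvars : ∀ t ∈ ts, ∃ w : V, t = Term.var w) :
    v ∈ varsOf ts ↔ Term.var v ∈ ts := by
  constructor
  · rintro ⟨t, ht, hv⟩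
    obtain ⟨w, rfl⟩ := hvars t ht
    rw [Term.varIn_var_iff] at hv
    subst hv; exact ht
  · intro h
    exact ⟨_, h, .var v⟩

/-- The core double-matching lemma for a single resolution step. -/
theorem core_double_matching (A H : Atom P F V)
    (hAin : ∀ v : V, v ∉ varsOf A.inputs)
    (hAoutv : ∀ t ∈ A.outputs, ∃ v : V, t = Term.var v)
    (hAoutnd : A.outputs.Nodup)
    (hdisj : ∀ v ∈ A.vars, v ∉ H.vars)
    (σ : V → Term F V) (hσ : IsUnifier σ A H) :
    ∃ θ₁ θ₂ : V → Term F V,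
      (∀ v, v ∉ varsOf H.inputs → θ₁ v = Term.var v) ∧
      (∀ v ∈ varsOf H.inputs, ∀ w, ¬ VarIn w (θ₁ v)) ∧
      H.inputs.map (Term.subst θ₁) = A.inputs ∧
      (∀ v, v ∉ varsOf A.outputs → θ₂ v = Term.var v) ∧
      (∀ v ∈ varsOf A.outputs, θ₂ v ∈ H.outputs.map (Term.subst θ₁)) ∧
      A.outputs.map (Term.subst θ₂) = H.outputs.map (Term.subst θ₁) ∧
      IsMGU (Subst.comp θ₁ θ₂) A H := by
  classical
  have hpred_eq : ∀ σ'' : V → Term F V, IsUnifier σ'' A H → A.pred = H.pred := by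
    intro σ'' h
    have h' : Atom.subst σ'' A = Atom.subst σ'' H := h
    simpa [Atom.subst] using congrArg Atom.pred h'
  have hinputs_eq : ∀ σ'' : V → Term F V, IsUnifier σ'' A H →
      A.inputs.map (Term.subst σ'') = H.inputs.map (Term.subst σ'') := by
    intro σ'' h
    have h' : Atom.subst σ'' A = Atom.subst σ'' H := h
    simpa [Atom.subst] using congrArg Atom.inputs h'
  have houtputs_eq : ∀ σ'' : V → Term F V, IsUnifier σ'' A H →
      A.outputs.map (Term.subst σ'') = H.outputs.map (Term.subst σ'') := by
    intro σ'' h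
    have h' : Atom.subst σ'' A = Atom.subst σ'' H := h
    simpa [Atom.subst] using congrArg Atom.outputs h'
  have hpred : A.pred = H.pred := hpred_eq σ hσ
  have hin : A.inputs.map (Term.subst σ) = H.inputs.map (Term.subst σ) :=
    hinputs_eq σ hσ
  have hout : A.outputs.map (Term.subst σ) = H.outputs.map (Term.subst σ) :=
    houtputs_eq σ hσ
  have hAinfix : ∀ τ : V → Term F V, A.inputs.map (Term.subst τ) = A.inputs := by
    intro τ
    exact map_subst_eq_of_id fun v hv => absurd hv (hAin v)
  have hHinσ : H.inputs.map (Term.subst σ) = A.inputs := by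
    rw [← hin, hAinfix]
  -- θ₁
  set θ₁ : V → Term F V := fun v => if v ∈ varsOf H.inputs then σ v else Term.var v
    with hθ₁def
  have h1a : ∀ v, v ∉ varsOf H.inputs → θ₁ v = Term.var v := fun v hv => if_neg hv
  have h1σ : ∀ v ∈ varsOf H.inputs, θ₁ v = σ v := fun v hv => if_pos hv
  have h1c : H.inputs.map (Term.subst θ₁) = A.inputs := by
    rw [map_subst_congrOn h1σ, hHinσ]
  have h1b : ∀ v ∈ varsOf H.inputs, ∀ w, ¬ VarIn w (θ₁ v) := by
    rintro v hv w hw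
    rw [h1σ v hv] at hw
    obtain ⟨t, ht, hvt⟩ := hv
    have : VarIn w (t.subst σ) := Term.varIn_subst.mpr ⟨v, hvt, hw⟩
    exact hAin w ⟨t.subst σ, hHinσ ▸ List.mem_map_of_mem ht, this⟩
  -- ground terms are fixed by any substitution
  have hground_fix : ∀ (t : Term F V), (∀ w, ¬ VarIn w t) → ∀ τ, t.subst τ = t :=
    fun t hg τ => Term.subst_eq_of_id fun w hw => absurd hw (hg w)
  -- θ₂
  set H1outs := H.outputs.map (Term.subst θ₁) with hH1outs
  set θ₂ : V → Term F V := lookupOut A.outputs H1outs with hθ₂def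
  have h2a : ∀ v, v ∉ varsOf A.outputs → θ₂ v = Term.var v := by
    intro v hv
    refine lookupOut_not_mem fun t ht hc => hv ?_
    subst hc; exact ⟨_, ht, .var v⟩
  have hlen : A.outputs.length = H1outs.length := by
    have := congrArg List.length hout
    simpa [hH1outs] using this
  have h2c : A.outputs.map (Term.subst θ₂) = H1outs :=
    map_lookupOut hAoutv hAoutnd hlen
  -- variables of H1outs: in H.vars, disjoint from A.vars
  have hH1vars : ∀ w ∈ varsOf H1outs, w ∈ H.vars := by
    intro w hw
    rw [hH1outs] at hw
    obtain ⟨u, hu, hwu⟩ := varsOf_map_subst.mp hw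
    by_cases huin : u ∈ varsOf H.inputs
    · exact absurd hwu (h1b u huin w)
    · rw [h1a u huin, Term.varIn_var_iff] at hwu
      subst hwu; exact Or.inr hu
  have hθ₂fixH1 : H1outs.map (Term.subst θ₂) = H1outs := by
    refine map_subst_eq_of_id fun w hw => h2a w fun hwA => ?_
    exact hdisj w (Or.inr hwA) (hH1vars w hw)
  -- agreement of unifiers on varsOf H.inputs
  have hagree : ∀ (σ' : V → Term F V), IsUnifier σ' A H →
      ∀ v ∈ varsOf H.inputs, σ' v = σ v := by
    intro σ' hσ' v hv
    have hin' : H.inputs.map (Term.subst σ') = A.inputs := by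
      rw [← hinputs_eq σ' hσ', hAinfix]
    have : H.inputs.map (Term.subst σ') = H.inputs.map (Term.subst σ) := by
      rw [hin', hHinσ]
    obtain ⟨t, ht, hvt⟩ := hv
    exact Term.subst_eq_subst_var (List.map_eq_map_iff.mp this t ht) v hvt
  -- θ := comp θ₁ θ₂ pointwise facts
  have hθin : ∀ v ∈ varsOf H.inputs, Subst.comp θ₁ θ₂ v = σ v := by
    intro v hv
    show (θ₁ v).subst θ₂ = σ v
    rw [h1σ v hv]
    exact hground_fix (σ v) (fun w hw => h1b v hv w (h1σ v hv ▸ hw)) θ₂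
  have hθout : ∀ v, v ∉ varsOf H.inputs → Subst.comp θ₁ θ₂ v = θ₂ v := by
    intro v hv
    show (θ₁ v).subst θ₂ = θ₂ v
    rw [h1a v hv, Term.subst_var]
  -- unifier
  have hAout_fixθ₁ : A.outputs.map (Term.subst θ₁) = A.outputs := by
    refine map_subst_eq_of_id fun v hv => h1a v fun hvH => ?_
    exact hdisj v (Or.inr hv) (Or.inl hvH)
  have hunif : IsUnifier (Subst.comp θ₁ θ₂) A H := by
    show A.subst _ = H.subst _
    simp only [Atom.subst, Atom.mk.injEq]
    refine ⟨hpred, ?_, ?_⟩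
    · rw [← map_subst_subst, ← map_subst_subst, h1c, hAinfix θ₁]
    · rw [← map_subst_subst, ← map_subst_subst, hAout_fixθ₁, h2c, hθ₂fixH1]
  -- MGU
  have h2mem : ∀ v ∈ varsOf A.outputs, θ₂ v ∈ H1outs := fun v hv =>
    lookupOut_mem ((mem_varsOf_of_var hAoutv).mp hv) hlen
  refine ⟨θ₁, θ₂, h1a, h1b, h1c, h2a, h2mem, h2c,
    hunif, ?_⟩
  intro σ' hσ'
  refine ⟨σ', fun v => ?_⟩
  by_cases hv : v ∈ varsOf H.inputs
  · rw [hθin v hv]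
    rw [hground_fix (σ v) (fun w hw => h1b v hv w (h1σ v hv ▸ hw)) σ']
    exact hagree σ' hσ' v hv
  · rw [hθout v hv]
    by_cases hvA : v ∈ varsOf A.outputs
    · -- key computation
      have hkey : A.outputs.map (Term.subst (Subst.comp θ₂ σ')) =
          A.outputs.map (Term.subst σ') := by
        rw [← map_subst_subst, h2c, hH1outs, map_subst_subst]
        rw [houtputs_eq σ' hσ']
        refine (map_subst_congrOn fun w hw => ?_)
        show (θ₁ w).subst σ' = σ' w
        by_cases hwin : w ∈ varsOf H.inputs
        · rw [h1σ w hwin, hground_fix (σ w) (fun u hu => h1b w hwin u (h1σ w hwin ▸ hu)) σ']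
          exact (hagree σ' hσ' w hwin).symm
        · rw [h1a w hwin, Term.subst_var]
      have hvmem : Term.var v ∈ A.outputs := (mem_varsOf_of_var hAoutv).mp hvA
      have h3 := List.map_eq_map_iff.mp hkey (Term.var v) hvmem
      simp only [Term.subst_var] at h3
      exact h3.symm
    · rw [h2a v hvA, Term.subst_var]

end Core
section Helpers

open Term

variable {P F V : Type}

/-- Flattened output tuples of a query. -/
def outsOf (L : List (Atom P F V)) : List (Term F V) := (L.map Atom.outputs).flatten

/-- Flattened input tuples of a query. -/
def insOf (L : List (Atom P F V)) : List (Term F V) := (L.map Atom.inputs).flatten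

theorem outsOf_append (L₁ L₂ : List (Atom P F V)) :
    outsOf (L₁ ++ L₂) = outsOf L₁ ++ outsOf L₂ := by
  simp [outsOf]

theorem insOf_append (L₁ L₂ : List (Atom P F V)) :
    insOf (L₁ ++ L₂) = insOf L₁ ++ insOf L₂ := by
  simp [insOf]

theorem outsOf_cons (a : Atom P F V) (L : List (Atom P F V)) :
    outsOf (a :: L) = a.outputs ++ outsOf L := by
  simp [outsOf]

theorem insOf_cons (a : Atom P F V) (L : List (Atom P F V)) :
    insOf (a :: L) = a.inputs ++ insOf L := by
  simp [insOf]

theorem outsOf_map_subst (ξ : V → Term F V) (L : List (Atom P F V)) :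
    outsOf (L.map (Atom.subst ξ)) = (outsOf L).map (Term.subst ξ) := by
  simp only [outsOf, List.map_map, List.map_flatten, List.map_map]
  rfl

theorem insOf_map_subst (ξ : V → Term F V) (L : List (Atom P F V)) :
    insOf (L.map (Atom.subst ξ)) = (insOf L).map (Term.subst ξ) := by
  simp only [insOf, List.map_map, List.map_flatten, List.map_map]
  rfl

theorem mem_outsOf {t : Term F V} {L : List (Atom P F V)} :
    t ∈ outsOf L ↔ ∃ a ∈ L, t ∈ a.outputs := by
  simp [outsOf, List.mem_flatten]

theorem mem_insOf {t : Term F V} {L : List (Atom P F V)} :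
    t ∈ insOf L ↔ ∃ a ∈ L, t ∈ a.inputs := by
  simp [insOf, List.mem_flatten]

theorem varsOf_outsOf_subset {L : List (Atom P F V)} :
    varsOf (outsOf L) ⊆ queryVars L := by
  rintro v ⟨t, ht, hvt⟩
  obtain ⟨a, ha, hta⟩ := mem_outsOf.mp ht
  exact ⟨a, ha, Or.inr ⟨t, hta, hvt⟩⟩

theorem varsOf_insOf_subset {L : List (Atom P F V)} :
    varsOf (insOf L) ⊆ queryVars L := by
  rintro v ⟨t, ht, hvt⟩
  obtain ⟨a, ha, hta⟩ := mem_insOf.mp ht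
  exact ⟨a, ha, Or.inl ⟨t, hta, hvt⟩⟩

theorem varsOf_outsOf_take_subset {L : List (Atom P F V)} {i : ℕ} :
    varsOf (outsOf (L.take i)) ⊆ varsOf (outsOf L) := by
  rintro v ⟨t, ht, hvt⟩
  obtain ⟨a, ha, hta⟩ := mem_outsOf.mp ht
  exact ⟨t, mem_outsOf.mpr ⟨a, List.mem_of_mem_take ha, hta⟩, hvt⟩

theorem varsOf_insOf_take_subset {L : List (Atom P F V)} {i : ℕ} :
    varsOf (insOf (L.take i)) ⊆ varsOf (insOf L) := by
  rintro v ⟨t, ht, hvt⟩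
  obtain ⟨a, ha, hta⟩ := mem_insOf.mp ht
  exact ⟨t, mem_insOf.mpr ⟨a, List.mem_of_mem_take ha, hta⟩, hvt⟩

theorem varsOf_atom_subset {a : Atom P F V} {L : List (Atom P F V)} (ha : a ∈ L) :
    a.vars ⊆ queryVars L := fun v hv => ⟨a, ha, hv⟩

/-- Restate `WellModedQuery` using `outsOf`/`insOf`. -/
theorem wellModedQuery_iff {Q : List (Atom P F V)} :
    WellModedQuery Q ↔ ∀ i (h : i < Q.length),
      varsOf (Q.get ⟨i, h⟩).inputs ⊆ varsOf (outsOf (Q.take i)) := Iff.rfl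

theorem simplyModedQuery_iff {Q : List (Atom P F V)} :
    SimplyModedQuery Q ↔
      (∀ t ∈ outsOf Q, ∃ v : V, t = Term.var v) ∧
      (outsOf Q).Nodup ∧
      ∀ i (h : i < Q.length),
        varsOf (Q.get ⟨i, h⟩).outputs ∩ varsOf (insOf (Q.take (i + 1))) = ∅ := Iff.rfl

end Helpers

section Renaming

open Term

variable {P F V : Type} {ξ : V → Term F V} {S : Set V}

/-- For a "renaming on `S`" substitution. -/
theorem ren_varsOf (hval : ∀ v ∈ S, ∃ w, ξ v = Term.var w)
    {ts : List (Term F V)} (hts : varsOf ts ⊆ S) {w : V} :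
    w ∈ varsOf (ts.map (Term.subst ξ)) ↔ ∃ v ∈ varsOf ts, ξ v = Term.var w := by
  rw [varsOf_map_subst]
  constructor
  · rintro ⟨v, hv, hw⟩
    obtain ⟨w', hw'⟩ := hval v (hts hv)
    rw [hw', Term.varIn_var_iff] at hw
    exact ⟨v, hv, by rw [hw', hw]⟩
  · rintro ⟨v, hv, hw⟩
    exact ⟨v, hv, hw ▸ .var w⟩

theorem ren_subset (hval : ∀ v ∈ S, ∃ w, ξ v = Term.var w)
    {ts₁ ts₂ : List (Term F V)} (h : varsOf ts₁ ⊆ varsOf ts₂)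
    (h₁ : varsOf ts₁ ⊆ S) (h₂ : varsOf ts₂ ⊆ S) :
    varsOf (ts₁.map (Term.subst ξ)) ⊆ varsOf (ts₂.map (Term.subst ξ)) := by
  intro w hw
  obtain ⟨v, hv, hvw⟩ := (ren_varsOf hval h₁).mp hw
  exact (ren_varsOf hval h₂).mpr ⟨v, h hv, hvw⟩

theorem ren_disjoint (hval : ∀ v ∈ S, ∃ w, ξ v = Term.var w)
    (hinj : ∀ v₁ ∈ S, ∀ v₂ ∈ S, ξ v₁ = ξ v₂ → v₁ = v₂)
    {ts₁ ts₂ : List (Term F V)} (h : varsOf ts₁ ∩ varsOf ts₂ = ∅)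
    (h₁ : varsOf ts₁ ⊆ S) (h₂ : varsOf ts₂ ⊆ S) :
    varsOf (ts₁.map (Term.subst ξ)) ∩ varsOf (ts₂.map (Term.subst ξ)) = ∅ := by
  rw [Set.eq_empty_iff_forall_notMem]
  rintro w ⟨hw₁, hw₂⟩
  obtain ⟨v₁, hv₁, hvw₁⟩ := (ren_varsOf hval h₁).mp hw₁
  obtain ⟨v₂, hv₂, hvw₂⟩ := (ren_varsOf hval h₂).mp hw₂
  have : v₁ = v₂ := hinj v₁ (h₁ hv₁) v₂ (h₂ hv₂) (by rw [hvw₁, hvw₂])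
  subst this
  exact Set.eq_empty_iff_forall_notMem.mp h v₁ ⟨hv₁, hv₂⟩

theorem ren_nodup (hval : ∀ v ∈ S, ∃ w, ξ v = Term.var w)
    (hinj : ∀ v₁ ∈ S, ∀ v₂ ∈ S, ξ v₁ = ξ v₂ → v₁ = v₂)
    {ts : List (Term F V)} (hvars : ∀ t ∈ ts, ∃ v : V, t = Term.var v)
    (hts : varsOf ts ⊆ S) (hnd : ts.Nodup) : (ts.map (Term.subst ξ)).Nodup := by
  refine hnd.map_on ?_
  rintro t₁ ht₁ t₂ ht₂ h
  obtain ⟨v₁, rfl⟩ := hvars t₁ ht₁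
  obtain ⟨v₂, rfl⟩ := hvars t₂ ht₂
  simp only [Term.subst_var] at h
  have h₁ : v₁ ∈ S := hts ⟨_, ht₁, .var v₁⟩
  have h₂ : v₂ ∈ S := hts ⟨_, ht₂, .var v₂⟩
  rw [hinj v₁ h₁ v₂ h₂ h]

theorem ren_var_terms (hval : ∀ v ∈ S, ∃ w, ξ v = Term.var w)
    {ts : List (Term F V)} (hvars : ∀ t ∈ ts, ∃ v : V, t = Term.var v)
    (hts : varsOf ts ⊆ S) : ∀ t ∈ ts.map (Term.subst ξ), ∃ v : V, t = Term.var v := by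
  rintro t' ht'
  obtain ⟨t, ht, rfl⟩ := List.mem_map.mp ht'
  obtain ⟨v, rfl⟩ := hvars t ht
  obtain ⟨w, hw⟩ := hval v (hts ⟨_, ht, .var v⟩)
  exact ⟨w, by simpa using hw⟩

end Renaming
section Transfer

open Term

variable {P F V : Type} {ξ : V → Term F V} {S : Set V}

theorem take_map_subst (ξ : V → Term F V) (Q : List (Atom P F V)) (i : ℕ) :
    (Q.map (Atom.subst ξ)).take i = (Q.take i).map (Atom.subst ξ) :=
  (List.map_take ..).symm

theorem get_map_subst (ξ : V → Term F V) (Q : List (Atom P F V)) {i : ℕ}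
    (h : i < (Q.map (Atom.subst ξ)).length) (h' : i < Q.length) :
    (Q.map (Atom.subst ξ)).get ⟨i, h⟩ = (Q.get ⟨i, h'⟩).subst ξ := by
  simp [List.get_eq_getElem, List.getElem_map]

theorem varsOf_get_inputs_subset {Q : List (Atom P F V)} {i : ℕ} (h : i < Q.length) :
    varsOf (Q.get ⟨i, h⟩).inputs ⊆ queryVars Q := fun v hv =>
  ⟨Q.get ⟨i, h⟩, Q.get_mem _, Or.inl hv⟩

theorem varsOf_get_outputs_subset {Q : List (Atom P F V)} {i : ℕ} (h : i < Q.length) :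
    varsOf (Q.get ⟨i, h⟩).outputs ⊆ queryVars Q := fun v hv =>
  ⟨Q.get ⟨i, h⟩, Q.get_mem _, Or.inr hv⟩

theorem WellModedQuery.rename (hval : ∀ v ∈ S, ∃ w, ξ v = Term.var w)
    {Q : List (Atom P F V)} (hQ : queryVars Q ⊆ S) (h : WellModedQuery Q) :
    WellModedQuery (Q.map (Atom.subst ξ)) := by
  intro i hi
  have hi' : i < Q.length := by simpa using hi
  show varsOf ((Q.map (Atom.subst ξ)).get ⟨i, hi⟩).inputs ⊆
    varsOf (outsOf ((Q.map (Atom.subst ξ)).take i))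
  rw [get_map_subst ξ Q hi hi', take_map_subst, outsOf_map_subst]
  show varsOf ((Q.get ⟨i, hi'⟩).inputs.map (Term.subst ξ)) ⊆ _
  exact ren_subset hval (h i hi')
    ((varsOf_get_inputs_subset hi').trans hQ)
    ((varsOf_outsOf_take_subset.trans varsOf_outsOf_subset).trans hQ)

theorem SimplyModedQuery.rename (hval : ∀ v ∈ S, ∃ w, ξ v = Term.var w)
    (hinj : ∀ v₁ ∈ S, ∀ v₂ ∈ S, ξ v₁ = ξ v₂ → v₁ = v₂)
    {Q : List (Atom P F V)} (hQ : queryVars Q ⊆ S) (h : SimplyModedQuery Q) :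
    SimplyModedQuery (Q.map (Atom.subst ξ)) := by
  obtain ⟨hv, hnd, hint⟩ := h
  refine ⟨?_, ?_, ?_⟩
  · show ∀ t ∈ outsOf (Q.map (Atom.subst ξ)), _
    rw [outsOf_map_subst]
    exact ren_var_terms hval hv (varsOf_outsOf_subset.trans hQ)
  · show (outsOf (Q.map (Atom.subst ξ))).Nodup
    rw [outsOf_map_subst]
    exact ren_nodup hval hinj hv (varsOf_outsOf_subset.trans hQ) hnd
  · intro i hi
    have hi' : i < Q.length := by simpa using hi
    show varsOf ((Q.map (Atom.subst ξ)).get ⟨i, hi⟩).outputs ∩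
      varsOf (insOf ((Q.map (Atom.subst ξ)).take (i + 1))) = ∅
    rw [get_map_subst ξ Q hi hi', take_map_subst, insOf_map_subst]
    show varsOf ((Q.get ⟨i, hi'⟩).outputs.map (Term.subst ξ)) ∩ _ = ∅
    exact ren_disjoint hval hinj (hint i hi')
      ((varsOf_get_outputs_subset hi').trans hQ)
      ((varsOf_insOf_take_subset.trans varsOf_insOf_subset).trans hQ)

theorem WellModedClause.rename (hval : ∀ v ∈ S, ∃ w, ξ v = Term.var w)
    {head : Atom P F V} {body : List (Atom P F V)}
    (hS : head.vars ∪ queryVars body ⊆ S) (h : WellModedClause head body) :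
    WellModedClause (head.subst ξ) (body.map (Atom.subst ξ)) := by
  obtain ⟨h1, h2⟩ := h
  have hin : varsOf head.inputs ⊆ S := fun v hv => hS (Or.inl (Or.inl hv))
  have hout : varsOf head.outputs ⊆ S := fun v hv => hS (Or.inl (Or.inr hv))
  have hbodyout : varsOf (outsOf body) ⊆ S := fun v hv =>
    hS (Or.inr (varsOf_outsOf_subset hv))
  constructor
  · intro i hi
    have hi' : i < body.length := by simpa using hi
    show varsOf ((body.map (Atom.subst ξ)).get ⟨i, hi⟩).inputs ⊆
      varsOf ((head.subst ξ).inputs ++ outsOf ((body.map (Atom.subst ξ)).take i))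
    rw [get_map_subst ξ body hi hi', take_map_subst, outsOf_map_subst]
    show varsOf ((body.get ⟨i, hi'⟩).inputs.map (Term.subst ξ)) ⊆
      varsOf (head.inputs.map (Term.subst ξ) ++ _)
    rw [← List.map_append]
    refine ren_subset hval (h1 i hi') (fun v hv => hS (Or.inr
      (varsOf_get_inputs_subset hi' hv))) ?_
    rw [varsOf_append]
    rintro v (hv | hv)
    · exact hin hv
    · exact hbodyout (varsOf_outsOf_take_subset hv)
  · show varsOf (head.outputs.map (Term.subst ξ)) ⊆
      varsOf ((head.inputs.map (Term.subst ξ)) ++ outsOf (body.map (Atom.subst ξ)))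
    rw [outsOf_map_subst, ← List.map_append]
    refine ren_subset hval h2 hout ?_
    rw [varsOf_append]
    rintro v (hv | hv)
    · exact hin hv
    · exact hbodyout hv

theorem SimplyModedClause.rename (hval : ∀ v ∈ S, ∃ w, ξ v = Term.var w)
    (hinj : ∀ v₁ ∈ S, ∀ v₂ ∈ S, ξ v₁ = ξ v₂ → v₁ = v₂)
    {head : Atom P F V} {body : List (Atom P F V)}
    (hS : head.vars ∪ queryVars body ⊆ S) (h : SimplyModedClause head body) :
    SimplyModedClause (head.subst ξ) (body.map (Atom.subst ξ)) := by
  obtain ⟨hv, hnd, hint⟩ := h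
  have hin : varsOf head.inputs ⊆ S := fun v hv => hS (Or.inl (Or.inl hv))
  have hbodyout : varsOf (outsOf body) ⊆ S := fun v hv =>
    hS (Or.inr (varsOf_outsOf_subset hv))
  have hbodyin : varsOf (insOf body) ⊆ S := fun v hv =>
    hS (Or.inr (varsOf_insOf_subset hv))
  refine ⟨?_, ?_, ?_⟩
  · show ∀ t ∈ outsOf (body.map (Atom.subst ξ)), _
    rw [outsOf_map_subst]
    exact ren_var_terms hval hv hbodyout
  · show (outsOf (body.map (Atom.subst ξ))).Nodup
    rw [outsOf_map_subst]
    exact ren_nodup hval hinj hv hbodyout hnd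
  · intro i hi
    have hi' : i < body.length := by simpa using hi
    show varsOf ((body.map (Atom.subst ξ)).get ⟨i, hi⟩).outputs ∩
      varsOf ((head.subst ξ).inputs ++ insOf ((body.map (Atom.subst ξ)).take (i + 1))) = ∅
    rw [get_map_subst ξ body hi hi', take_map_subst, insOf_map_subst]
    show varsOf ((body.get ⟨i, hi'⟩).outputs.map (Term.subst ξ)) ∩
      varsOf (head.inputs.map (Term.subst ξ) ++ _) = ∅
    rw [← List.map_append]
    refine ren_disjoint hval hinj (hint i hi')
      (fun v hv => hS (Or.inr (varsOf_get_outputs_subset hi' hv))) ?_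
    rw [varsOf_append]
    rintro v (hv | hv)
    · exact hin hv
    · exact hbodyin (varsOf_insOf_take_subset hv)

end Transfer
section Resolvent

open Term

variable {P F V : Type}

theorem set_inter_empty_iff {S T : Set V} :
    S ∩ T = ∅ ↔ ∀ v, v ∈ S → v ∈ T → False := by
  rw [Set.eq_empty_iff_forall_notMem]
  exact ⟨fun h v hS hT => h v ⟨hS, hT⟩, fun h v ⟨hS, hT⟩ => h v hS hT⟩

theorem resolvent_wm_sm
    (A H : Atom P F V) (rest Bbar : List (Atom P F V)) (θ₁ θ₂ : V → Term F V)
    (hQWM : WellModedQuery (A :: rest)) (hQSM : SimplyModedQuery (A :: rest))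
    (hCWM : WellModedClause H Bbar) (hCSM : SimplyModedClause H Bbar)
    (hdisj : ∀ v ∈ queryVars (A :: rest), v ∉ H.vars ∪ queryVars Bbar)
    (h1a : ∀ v, v ∉ varsOf H.inputs → θ₁ v = Term.var v)
    (h1b : ∀ v ∈ varsOf H.inputs, ∀ w, ¬ VarIn w (θ₁ v))
    (h2a : ∀ v, v ∉ varsOf A.outputs → θ₂ v = Term.var v)
    (h2mem : ∀ v ∈ varsOf A.outputs, θ₂ v ∈ H.outputs.map (Term.subst θ₁)) :
    WellModedQuery (Bbar.map (Atom.subst θ₁) ++ rest.map (Atom.subst θ₂)) ∧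
    SimplyModedQuery (Bbar.map (Atom.subst θ₁) ++ rest.map (Atom.subst θ₂)) := by
  obtain ⟨hCW1, hCW2⟩ := hCWM
  obtain ⟨hCSv, hCSnd, hCSint⟩ := hCSM
  obtain ⟨hQSv, hQSnd, hQSint⟩ := hQSM
  have hQSnd' : (outsOf (A :: rest)).Nodup := hQSnd
  -- basic var facts
  have hθ₁var : ∀ v w, VarIn w (θ₁ v) → w = v ∧ v ∉ varsOf H.inputs := by
    intro v w hw
    by_cases hv : v ∈ varsOf H.inputs
    · exact absurd hw (h1b v hv w)
    · rw [h1a v hv, Term.varIn_var_iff] at hw; exact ⟨hw, hv⟩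
  -- Hout1
  have hHout1 : ∀ w ∈ varsOf (H.outputs.map (Term.subst θ₁)), w ∈ varsOf (outsOf Bbar) := by
    intro w hw
    obtain ⟨u, hu, hwu⟩ := varsOf_map_subst.mp hw
    obtain ⟨rfl, hnin⟩ := hθ₁var u w hwu
    have := hCW2 hu
    rw [varsOf_append] at this
    rcases this with h | h
    · exact absurd h hnin
    · exact h
  have hθ₂var : ∀ v w, VarIn w (θ₂ v) →
      (v ∈ varsOf A.outputs ∧ w ∈ varsOf (outsOf Bbar)) ∨
      (w = v ∧ v ∉ varsOf A.outputs) := by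
    intro v w hw
    by_cases hv : v ∈ varsOf A.outputs
    · exact Or.inl ⟨hv, hHout1 w ⟨θ₂ v, h2mem v hv, hw⟩⟩
    · rw [h2a v hv, Term.varIn_var_iff] at hw; exact Or.inr ⟨hw, hv⟩
  -- outputs of Q as var terms
  have hQSv' : ∀ t ∈ outsOf (A :: rest), ∃ v : V, t = Term.var v := hQSv
  have houtQ : outsOf (A :: rest) = A.outputs ++ outsOf rest := outsOf_cons ..
  -- clause SM: body output vars avoid head inputs and body inputs
  have hCout_not_Hin : ∀ v ∈ varsOf (outsOf Bbar), v ∉ varsOf H.inputs := by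
    rintro v ⟨t, ht, hvt⟩ hvin
    obtain ⟨a, ha, hta⟩ := mem_outsOf.mp ht
    obtain ⟨i, rfl⟩ := List.mem_iff_get.mp ha
    refine set_inter_empty_iff.mp (hCSint i.1 i.2) v ⟨t, hta, hvt⟩ ?_
    rw [varsOf_append]
    exact Or.inl hvin
  -- θ₁ fixes body outputs
  have hBoutfix : ∀ v ∈ varsOf (outsOf Bbar), θ₁ v = Term.var v := fun v hv =>
    h1a v (hCout_not_Hin v hv)
  -- query rest output vars avoid A.outputs
  have hRout_not_Aout : ∀ v ∈ varsOf (outsOf rest), v ∉ varsOf A.outputs := by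
    rintro v ⟨t, ht, hvt⟩ hvA
    have hAv : ∀ t ∈ A.outputs, ∃ w : V, t = Term.var w := fun t ht =>
      hQSv' t (houtQ ▸ List.mem_append_left _ ht)
    have hvmem : Term.var v ∈ A.outputs := (mem_varsOf_of_var hAv).mp hvA
    obtain ⟨w, rfl⟩ := hQSv' t (houtQ ▸ List.mem_append_right _ ht)
    rw [Term.varIn_var_iff] at hvt
    subst hvt
    have hnd := houtQ ▸ hQSnd'
    exact List.disjoint_of_nodup_append hnd hvmem ht
  have hRoutfix : ∀ v ∈ varsOf (outsOf rest), θ₂ v = Term.var v := fun v hv =>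
    h2a v (hRout_not_Aout v hv)
  set B1 := Bbar.map (Atom.subst θ₁) with hB1
  set R2 := rest.map (Atom.subst θ₂) with hR2
  -- fixed forms
  have e_outB : ∀ i, outsOf (B1.take i) = outsOf (Bbar.take i) := by
    intro i
    rw [hB1, take_map_subst, outsOf_map_subst]
    exact map_subst_eq_of_id fun v hv => hBoutfix v (varsOf_outsOf_take_subset hv)
  have e_outBfull : outsOf B1 = outsOf Bbar := by
    rw [hB1, outsOf_map_subst]
    exact map_subst_eq_of_id hBoutfix
  have e_outR : ∀ i, outsOf (R2.take i) = outsOf (rest.take i) := by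
    intro i
    rw [hR2, take_map_subst, outsOf_map_subst]
    exact map_subst_eq_of_id fun v hv => hRoutfix v (varsOf_outsOf_take_subset hv)
  have e_outRfull : outsOf R2 = outsOf rest := by
    rw [hR2, outsOf_map_subst]
    exact map_subst_eq_of_id hRoutfix
  -- disjointness helpers
  have hd : ∀ v ∈ queryVars (A :: rest), v ∉ queryVars Bbar := fun v hv hB =>
    hdisj v hv (Or.inr hB)
  have hdH : ∀ v ∈ queryVars (A :: rest), v ∉ H.vars := fun v hv hB =>
    hdisj v hv (Or.inl hB)
  have hlenB : B1.length = Bbar.length := by simp [hB1]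
  have hlenR : R2.length = rest.length := by simp [hR2]
  -- get lemmas
  have hgetL : ∀ (i : ℕ) (hi : i < (B1 ++ R2).length) (hiB : i < Bbar.length),
      (B1 ++ R2).get ⟨i, hi⟩ = (Bbar.get ⟨i, hiB⟩).subst θ₁ := by
    intro i hi hiB
    rw [List.get_eq_getElem, List.getElem_append_left (by omega : i < B1.length)]
    simp [hB1]
  have hgetR : ∀ (j : ℕ) (hi : Bbar.length + j < (B1 ++ R2).length) (hj : j < rest.length),
      (B1 ++ R2).get ⟨Bbar.length + j, hi⟩ = (rest.get ⟨j, hj⟩).subst θ₂ := by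
    intro j hi hj
    rw [List.get_eq_getElem,
      List.getElem_append_right (by omega : B1.length ≤ Bbar.length + j)]
    simp [hB1, hR2]
  have htakeL : ∀ (i : ℕ), i ≤ Bbar.length → (B1 ++ R2).take i = B1.take i := by
    intro i hiB
    rw [List.take_append]
    have : i - B1.length = 0 := by omega
    rw [this]
    simp
  have htakeR : ∀ (j : ℕ), (B1 ++ R2).take (Bbar.length + j) = B1 ++ R2.take j := by
    intro j
    rw [List.take_append]
    have h1 : B1.length ≤ Bbar.length + j := by omega
    have h2 : Bbar.length + j - B1.length = j := by omega
    rw [h2, List.take_of_length_le h1]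
  -- query WM/SM access for rest atoms
  have hQWMrest : ∀ (j : ℕ) (hj : j < rest.length),
      varsOf (rest.get ⟨j, hj⟩).inputs ⊆
        varsOf (A.outputs ++ outsOf (rest.take j)) := by
    intro j hj
    have := hQWM (j + 1) (by simpa using Nat.succ_lt_succ hj)
    simpa [outsOf, List.take_succ_cons] using this
  have hQSMrest : ∀ (j : ℕ) (hj : j < rest.length),
      varsOf (rest.get ⟨j, hj⟩).outputs ∩
        varsOf (A.inputs ++ insOf (rest.take (j + 1))) = ∅ := by
    intro j hj
    have := hQSint (j + 1) (by simpa using Nat.succ_lt_succ hj)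
    simpa [insOf, List.take_succ_cons] using this
  constructor
  · -- Well-moded
    intro i hi
    show varsOf (((B1 ++ R2).get ⟨i, hi⟩).inputs) ⊆ varsOf (outsOf ((B1 ++ R2).take i))
    rcases Nat.lt_or_ge i Bbar.length with hiB | hiB
    · rw [hgetL i hi hiB, htakeL i (le_of_lt hiB), e_outB]
      show varsOf ((Bbar.get ⟨i, hiB⟩).inputs.map (Term.subst θ₁)) ⊆ _
      intro v hv
      obtain ⟨u, hu, hvu⟩ := varsOf_map_subst.mp hv
      obtain ⟨rfl, hnin⟩ := hθ₁var u v hvu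
      have := hCW1 i hiB hu
      rw [varsOf_append] at this
      rcases this with h | h
      · exact absurd h hnin
      · exact h
    · obtain ⟨j, rfl⟩ : ∃ j, i = Bbar.length + j := ⟨i - Bbar.length, by omega⟩
      have hj : j < rest.length := by
        simp only [List.length_append, hlenB, hlenR] at hi
        omega
      rw [hgetR j hi hj, htakeR j, outsOf_append, e_outR, e_outBfull]
      show varsOf ((rest.get ⟨j, hj⟩).inputs.map (Term.subst θ₂)) ⊆ _
      intro v hv
      obtain ⟨u, hu, hvu⟩ := varsOf_map_subst.mp hv
      rw [varsOf_append]
      have huQ := hQWMrest j hj hu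
      rw [varsOf_append] at huQ
      rcases hθ₂var u v hvu with ⟨_, hvB⟩ | ⟨rfl, hnA⟩
      · exact Or.inl hvB
      · rcases huQ with h | h
        · exact absurd h hnA
        · exact Or.inr h
  · -- Simply moded
    refine ⟨?_, ?_, ?_⟩
    · show ∀ t ∈ outsOf (B1 ++ R2), _
      rw [outsOf_append, e_outBfull, e_outRfull]
      intro t ht
      rcases List.mem_append.mp ht with h | h
      · exact hCSv t h
      · exact hQSv' t (houtQ ▸ List.mem_append_right _ h)
    · show (outsOf (B1 ++ R2)).Nodup
      rw [outsOf_append, e_outBfull, e_outRfull]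
      refine List.Nodup.append hCSnd ((houtQ ▸ hQSnd').of_append_right) ?_
      intro t htB htR
      obtain ⟨u, rfl⟩ := hCSv t htB
      have huB : u ∈ queryVars Bbar := varsOf_outsOf_subset ⟨_, htB, .var u⟩
      have huQ : u ∈ queryVars (A :: rest) := by
        refine varsOf_outsOf_subset (L := A :: rest) ?_
        exact ⟨_, houtQ ▸ List.mem_append_right _ htR, .var u⟩
      exact hd u huQ huB
    · intro i hi
      show varsOf (((B1 ++ R2).get ⟨i, hi⟩).outputs) ∩
        varsOf (insOf ((B1 ++ R2).take (i + 1))) = ∅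
      rcases Nat.lt_or_ge i Bbar.length with hiB | hiB
      · rw [hgetL i hi hiB]
        have htk : (B1 ++ R2).take (i + 1) = B1.take (i + 1) := htakeL (i + 1) (by omega)
        rw [htk]
        have e_in : insOf (B1.take (i + 1)) = (insOf (Bbar.take (i + 1))).map (Term.subst θ₁) := by
          rw [hB1, take_map_subst, insOf_map_subst]
        rw [e_in]
        have e_out : (Atom.subst θ₁ (Bbar.get ⟨i, hiB⟩)).outputs = (Bbar.get ⟨i, hiB⟩).outputs := by
          show (Bbar.get ⟨i, hiB⟩).outputs.map (Term.subst θ₁) = _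
          refine map_subst_eq_of_id fun v hv => hBoutfix v ?_
          obtain ⟨t, ht, hvt⟩ := hv
          exact ⟨t, mem_outsOf.mpr ⟨_, List.get_mem .., ht⟩, hvt⟩
        rw [e_out]
        refine set_inter_empty_iff.mpr fun v hvout hvin => ?_
        obtain ⟨u, hu, hvu⟩ := varsOf_map_subst.mp hvin
        obtain ⟨rfl, hnin⟩ := hθ₁var u v hvu
        refine set_inter_empty_iff.mp (hCSint i hiB) v hvout ?_
        show v ∈ varsOf (H.inputs ++ insOf (Bbar.take (i + 1)))
        rw [varsOf_append]
        exact Or.inr hu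
      · obtain ⟨j, rfl⟩ : ∃ j, i = Bbar.length + j := ⟨i - Bbar.length, by omega⟩
        have hj : j < rest.length := by
          simp only [List.length_append, hlenB, hlenR] at hi
          omega
        rw [hgetR j hi hj]
        have hplus : Bbar.length + j + 1 = Bbar.length + (j + 1) := by omega
        rw [hplus, htakeR (j + 1), insOf_append]
        have e_inB : insOf B1 = (insOf Bbar).map (Term.subst θ₁) := by
          rw [hB1, insOf_map_subst]
        have e_inR : insOf (R2.take (j + 1)) =
            (insOf (rest.take (j + 1))).map (Term.subst θ₂) := by
          rw [hR2, take_map_subst, insOf_map_subst]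
        rw [e_inB, e_inR]
        have e_outj : (Atom.subst θ₂ (rest.get ⟨j, hj⟩)).outputs =
            (rest.get ⟨j, hj⟩).outputs := by
          show (rest.get ⟨j, hj⟩).outputs.map (Term.subst θ₂) = _
          refine map_subst_eq_of_id fun v hv => hRoutfix v ?_
          obtain ⟨t, ht, hvt⟩ := hv
          exact ⟨t, mem_outsOf.mpr ⟨_, List.get_mem .., ht⟩, hvt⟩
        rw [e_outj]
        refine set_inter_empty_iff.mpr fun v hvout hvin => ?_
        have hvQ : v ∈ queryVars (A :: rest) :=
          ⟨rest.get ⟨j, hj⟩, List.mem_cons_of_mem _ (List.get_mem ..), Or.inr hvout⟩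
        rw [varsOf_append] at hvin
        rcases hvin with hvin | hvin
        · obtain ⟨u, hu, hvu⟩ := varsOf_map_subst.mp hvin
          rcases hθ₁var u v hvu with ⟨rfl, _⟩
          exact hd v hvQ (varsOf_insOf_subset hu)
        · obtain ⟨u, hu, hvu⟩ := varsOf_map_subst.mp hvin
          rcases hθ₂var u v hvu with ⟨_, hvB⟩ | ⟨rfl, _⟩
          · exact hd v hvQ (varsOf_outsOf_subset hvB)
          · refine set_inter_empty_iff.mp (hQSMrest j hj) v hvout ?_
            rw [varsOf_append]
            exact Or.inr hu

end Resolvent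
section Persistence

open Term

variable {P F V : Type}

theorem query_map_subst_self {Q : List (Atom P F V)} {ξ : V → Term F V}
    (h : Q.map (Atom.subst ξ) = Q) : ∀ w ∈ queryVars Q, ξ w = Term.var w := by
  rintro w ⟨a, ha, hw⟩
  have h' : Q.map (Atom.subst ξ) = Q.map id := by rw [h, List.map_id]
  have ha' : a.subst ξ = a := List.map_eq_map_iff.mp h' a ha
  have hin : a.inputs.map (Term.subst ξ) = a.inputs.map (Term.subst Term.var) := by
    have := congrArg Atom.inputs ha'
    simp only [Atom.subst] at this
    rw [this]
    exact (map_subst_eq_of_id fun v _ => rfl).symm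
  have hout : a.outputs.map (Term.subst ξ) = a.outputs.map (Term.subst Term.var) := by
    have := congrArg Atom.outputs ha'
    simp only [Atom.subst] at this
    rw [this]
    exact (map_subst_eq_of_id fun v _ => rfl).symm
  rcases hw with ⟨t, ht, hwt⟩ | ⟨t, ht, hwt⟩
  · exact Term.subst_eq_subst_var (List.map_eq_map_iff.mp hin t ht) w hwt
  · exact Term.subst_eq_subst_var (List.map_eq_map_iff.mp hout t ht) w hwt

theorem ldstep_preserves (Prog : Set (Clause P F V))
    (hProgWM : ∀ c ∈ Prog, WellModedClause c.head c.body)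
    (hProgSM : ∀ c ∈ Prog, SimplyModedClause c.head c.body)
    {Q Q' : List (Atom P F V)} (hstep : LDStep Prog Q Q')
    (hWM : WellModedQuery Q) (hSM : SimplyModedQuery Q) :
    WellModedQuery Q' ∧ SimplyModedQuery Q' := by
  obtain ⟨A, rest, c, ρ, θ, hQeq, hc, hρ, hdisj, hmgu, hQ'eq⟩ := hstep
  subst hQeq
  set ξ : V → Term F V := fun v => Term.var (ρ v) with hξ
  set H := (c.subst ξ).head with hH
  set Bbar := (c.subst ξ).body with hB
  have hval : ∀ v ∈ (Set.univ : Set V), ∃ w, ξ v = Term.var w := fun v _ => ⟨ρ v, rfl⟩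
  have hinj : ∀ v₁ ∈ (Set.univ : Set V), ∀ v₂ ∈ (Set.univ : Set V),
      ξ v₁ = ξ v₂ → v₁ = v₂ := by
    intro v₁ _ v₂ _ h
    simp only [hξ, Term.var.injEq] at h
    exact hρ h
  have hCWM' : WellModedClause H Bbar :=
    WellModedClause.rename hval (fun _ _ => trivial) (hProgWM c hc)
  have hCSM' : SimplyModedClause H Bbar :=
    SimplyModedClause.rename hval hinj (fun _ _ => trivial) (hProgSM c hc)
  -- invariant facts
  have hAin : ∀ v, v ∉ varsOf A.inputs := by
    intro v hv
    have h0 := hWM 0 (by simp)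
    obtain ⟨t, ht, -⟩ := h0 hv
    simp at ht
  have houtQ : outsOf (A :: rest) = A.outputs ++ outsOf rest := outsOf_cons ..
  have hQSnd' : (outsOf (A :: rest)).Nodup := hSM.2.1
  have hSMv : ∀ t ∈ outsOf (A :: rest), ∃ v : V, t = Term.var v := hSM.1
  have hAoutv : ∀ t ∈ A.outputs, ∃ v : V, t = Term.var v := fun t ht =>
    hSMv t (houtQ ▸ List.mem_append_left _ ht)
  have hAoutnd : A.outputs.Nodup := (houtQ ▸ hQSnd').of_append_left
  have hdisjQ : ∀ v ∈ queryVars (A :: rest), v ∉ H.vars ∪ queryVars Bbar := by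
    intro v hv hvc
    exact Set.disjoint_left.mp hdisj hv hvc
  have hdisjAH : ∀ v ∈ A.vars, v ∉ H.vars := fun v hv hvH =>
    hdisjQ v ⟨A, List.mem_cons_self, hv⟩ (Or.inl hvH)
  -- core
  obtain ⟨θ₁, θ₂, h1a, h1b, h1c, h2a, h2mem, h2c, hmgu'⟩ :=
    core_double_matching A H hAin hAoutv hAoutnd hdisjAH θ hmgu.1
  obtain ⟨hWM'', hSM''⟩ := resolvent_wm_sm A H rest Bbar θ₁ θ₂ hWM hSM hCWM' hCSM'
    hdisjQ h1a h1b h2a h2mem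
  set Q'' := Bbar.map (Atom.subst θ₁) ++ rest.map (Atom.subst θ₂) with hQ''
  -- Q'' = (Bbar ++ rest).map (subst (comp θ₁ θ₂))
  have hθ₁varlem : ∀ v w, VarIn w (θ₁ v) → w = v ∧ v ∉ varsOf H.inputs := by
    intro v w hw
    by_cases hv : v ∈ varsOf H.inputs
    · exact absurd hw (h1b v hv w)
    · rw [h1a v hv, Term.varIn_var_iff] at hw; exact ⟨hw, hv⟩
  have hQ''eq : (Bbar ++ rest).map (Atom.subst (Subst.comp θ₁ θ₂)) = Q'' := by
    rw [List.map_append, hQ'']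
    congr 1
    · refine List.map_congr_left fun b hb => ?_
      rw [← Atom.subst_subst]
      refine Atom.subst_id' fun w hw => h2a w fun hwA => ?_
      -- w is a variable of b.subst θ₁; show it is not in varsOf A.outputs
      have hwB : w ∈ queryVars Bbar := by
        rcases hw with ⟨t, ht, hwt⟩ | ⟨t, ht, hwt⟩
        · obtain ⟨u, hu, hwu⟩ := varsOf_map_subst.mp ⟨t, ht, hwt⟩
          obtain ⟨rfl, -⟩ := hθ₁varlem u w hwu
          exact ⟨b, hb, Or.inl hu⟩
        · obtain ⟨u, hu, hwu⟩ := varsOf_map_subst.mp ⟨t, ht, hwt⟩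
          obtain ⟨rfl, -⟩ := hθ₁varlem u w hwu
          exact ⟨b, hb, Or.inr hu⟩
      have hwQ : w ∈ queryVars (A :: rest) :=
        ⟨A, List.mem_cons_self, Or.inr hwA⟩
      exact hdisjQ w hwQ (Or.inr hwB)
    · refine List.map_congr_left fun r hr => ?_
      rw [← Atom.subst_subst]
      congr 1
      refine Atom.subst_id' fun w hw => h1a w fun hwH => ?_
      have hwQ : w ∈ queryVars (A :: rest) :=
        ⟨r, List.mem_cons_of_mem _ hr, hw⟩
      exact hdisjQ w hwQ (Or.inl (Or.inl hwH))
  -- mutual factorization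
  obtain ⟨τ, hτ⟩ := hmgu'.2 θ hmgu.1
  obtain ⟨τ', hτ'⟩ := hmgu.2 (Subst.comp θ₁ θ₂) hmgu'.1
  have hcompτ : Subst.comp (Subst.comp θ₁ θ₂) τ = θ := funext fun v => (hτ v).symm
  have hcompτ' : Subst.comp θ τ' = Subst.comp θ₁ θ₂ := funext fun v => (hτ' v).symm
  have hQ'2 : Q' = Q''.map (Atom.subst τ) := by
    rw [hQ'eq, ← hQ''eq, List.map_map]
    refine List.map_congr_left fun a _ => ?_
    show Atom.subst θ a = Atom.subst τ (Atom.subst (Subst.comp θ₁ θ₂) a)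
    rw [Atom.subst_subst, hcompτ]
  have hQ''2 : Q'' = Q'.map (Atom.subst τ') := by
    rw [hQ'eq, ← hQ''eq, List.map_map]
    refine List.map_congr_left fun a _ => ?_
    show Atom.subst (Subst.comp θ₁ θ₂) a = Atom.subst τ' (Atom.subst θ a)
    rw [Atom.subst_subst, hcompτ']
  have hround : Q''.map (Atom.subst (Subst.comp τ τ')) = Q'' := by
    conv_rhs => rw [hQ''2, hQ'2]
    rw [List.map_map]
    refine List.map_congr_left fun a _ => ?_
    exact (Atom.subst_subst a).symm
  have hid : ∀ w ∈ queryVars Q'', (τ w).subst τ' = Term.var w := fun w hw =>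
    query_map_subst_self hround w hw
  have hvalτ : ∀ w ∈ queryVars Q'', ∃ u, τ w = Term.var u := by
    intro w hw
    cases hτw : τ w with
    | var u => exact ⟨u, rfl⟩
    | fn f args =>
      have := hid w hw
      rw [hτw, Term.subst_fn] at this
      exact absurd this (by simp)
  have hinjτ : ∀ w₁ ∈ queryVars Q'', ∀ w₂ ∈ queryVars Q'',
      τ w₁ = τ w₂ → w₁ = w₂ := by
    intro w₁ h₁ w₂ h₂ h
    have e₁ := hid w₁ h₁
    have e₂ := hid w₂ h₂
    rw [h] at e₁
    rw [e₂] at e₁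
    exact (Term.var.injEq _ _ ▸ e₁ : w₂ = w₁).symm
  rw [hQ'2]
  exact ⟨WellModedQuery.rename hvalτ subset_rfl hWM'',
    SimplyModedQuery.rename hvalτ hinjτ subset_rfl hSM''⟩

end Persistence
/-- If a program `Prog` and a query `Q₀` are both well-moded and simply moded,
then every LD-derivation of `Q₀` in `Prog` is unification-free: whenever an
atom `A` is selected (the leftmost atom of a query reachable from `Q₀` by
LD-resolution steps) and resolved via a variable-disjoint variant `H ← Bbar`
of a clause of `Prog` (with which `A` is unifiable), the unification of `A`
and `H` reduces to a double matching: there is a substitution `θ₁` acting only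
on variables of `H` matching the input positions of `H` to those of `A`, and a
substitution `θ₂` acting only on variables of `A` matching the output positions
of `A` to those of `Hθ₁`, and their composition is a most general unifier of
`A` and `H`. -/
theorem well_and_simply_moded_unification_free
    {P F V : Type} (Prog : Set (Clause P F V))
    (hProgWM : ∀ c ∈ Prog, WellModedClause c.head c.body)
    (hProgSM : ∀ c ∈ Prog, SimplyModedClause c.head c.body)
    (Q₀ : List (Atom P F V)) (hQ₀WM : WellModedQuery Q₀) (hQ₀SM : SimplyModedQuery Q₀)
    (Q : List (Atom P F V))
    (hreach : Relation.ReflTransGen (LDStep Prog) Q₀ Q)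
    (A : Atom P F V) (rest : List (Atom P F V)) (hsel : Q = A :: rest)
    (c : Clause P F V) (hc : c ∈ Prog) (ρ : V → V) (hρ : Function.Injective ρ)
    (H : Atom P F V) (Bbar : List (Atom P F V))
    (hH : H = (c.subst (fun v => Term.var (ρ v))).head)
    (hB : Bbar = (c.subst (fun v => Term.var (ρ v))).body)
    (hdisj : Disjoint (queryVars Q) (H.vars ∪ queryVars Bbar))
    (hunif : ∃ σ : V → Term F V, IsUnifier σ A H) :
    ∃ θ₁ θ₂ : V → Term F V,
      (∀ v : V, v ∉ H.vars → θ₁ v = Term.var v) ∧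
      H.inputs.map (Term.subst θ₁) = A.inputs ∧
      (∀ v : V, v ∉ A.vars → θ₂ v = Term.var v) ∧
      A.outputs.map (Term.subst θ₂) = (H.subst θ₁).outputs ∧
      IsMGU (Subst.comp θ₁ θ₂) A H := by
    have hinv : ∀ Q2, Relation.ReflTransGen (LDStep Prog) Q₀ Q2 →
        WellModedQuery Q2 ∧ SimplyModedQuery Q2 := by
      intro Q2 h
      induction h with
      | refl => exact ⟨hQ₀WM, hQ₀SM⟩
      | tail _ hstep ih => exact ldstep_preserves Prog hProgWM hProgSM hstep ih.1 ih.2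
    obtain ⟨hWM, hSM⟩ := hinv Q hreach
    subst hsel
    have hAin : ∀ v, v ∉ varsOf A.inputs := by
      intro v hv
      have h0 := hWM 0 (by simp)
      obtain ⟨t, ht, -⟩ := h0 hv
      simp at ht
    have houtQ : outsOf (A :: rest) = A.outputs ++ outsOf rest := outsOf_cons ..
    have hQSnd' : (outsOf (A :: rest)).Nodup := hSM.2.1
    have hSMv : ∀ t ∈ outsOf (A :: rest), ∃ v : V, t = Term.var v := hSM.1
    have hAoutv : ∀ t ∈ A.outputs, ∃ v : V, t = Term.var v := fun t ht =>
      hSMv t (houtQ ▸ List.mem_append_left _ ht)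
    have hAoutnd : A.outputs.Nodup := (houtQ ▸ hQSnd').of_append_left
    have hdisjAH : ∀ v ∈ A.vars, v ∉ H.vars := fun v hv hvH =>
      Set.disjoint_left.mp hdisj ⟨A, List.mem_cons_self, hv⟩ (Or.inl hvH)
    obtain ⟨σ, hσ⟩ := hunif
    obtain ⟨θ₁, θ₂, h1a, h1b, h1c, h2a, h2mem, h2c, hmgu⟩ :=
      core_double_matching A H hAin hAoutv hAoutnd hdisjAH σ hσ
    refine ⟨θ₁, θ₂, ?_, h1c, ?_, h2c, hmgu⟩
    · exact fun v hv => h1a v fun hin => hv (Or.inl hin)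
    · exact fun v hv => h2a v fun hout => hv (Or.inr hout)
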